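/- Let K₀ be a closed disk in ℝ² and let K₁ be isometric to K₀ (hence a closed disk of the same radius). Suppose both K₀ and K₁ are contained in a triangle conv{A₀, A₁, A₂} ⊆ ℝ². Then there exist j ∈ {0,1,2} and k ∈ {0,1} such that K_{1−k} ⊆ conv(K_k ∪ ({A₀, A₁, A₂} \ {A_j})). -/

import Mathlib

open RealInnerProductSpace

noncomputable section

/-- The Euclidean plane. -/
abbrev Pt : Type := EuclideanSpace ℝ (Fin 2)

/-- Counterclockwise rotation by π/2. -/
def rot (v : Pt) : Pt := WithLp.toLp 2 ![-(v 1), v 0]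

/-- The (directed) line through `p` with direction `v`. -/
def dline (p v : Pt) : Set Pt := {x : Pt | ∃ t : ℝ, x = p + t • v}

lemma inner_coord (x y : Pt) : ⟪x, y⟫ = x 0 * y 0 + x 1 * y 1 := by
  simp [PiLp.inner_apply, Fin.sum_univ_two, RCLike.inner_apply, conj_trivial]; ring

lemma rot_apply0 (v : Pt) : rot v 0 = -(v 1) := by simp [rot]
lemma rot_apply1 (v : Pt) : rot v 1 = v 0 := by simp [rot]

lemma norm_sq_coord (x : Pt) : ‖x‖^2 = x 0^2 + x 1^2 := by
  rw [← real_inner_self_eq_norm_sq, inner_coord]; ring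

lemma norm_rot (v : Pt) : ‖rot v‖ = ‖v‖ := by
  have h : ‖rot v‖^2 = ‖v‖^2 := by
    rw [norm_sq_coord, norm_sq_coord, rot_apply0, rot_apply1]; ring
  nlinarith [norm_nonneg (rot v), norm_nonneg v, sq_nonneg (‖rot v‖ - ‖v‖), sq_nonneg (‖rot v‖ + ‖v‖)]

lemma expand (u v θ : Pt) (hu : ‖u‖ = 1) :
    ⟪v, θ⟫ = ⟪v, rot u⟫ * ⟪rot u, θ⟫ + ⟪v, u⟫ * ⟪u, θ⟫ := by
  have h : u 0^2 + u 1^2 = 1 := by rw [← norm_sq_coord, hu]; norm_num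
  simp only [inner_coord, rot_apply0, rot_apply1]
  linear_combination (-(v 0 * θ 0) - v 1 * θ 1) * h

lemma circle_coord (u θ : Pt) (hu : ‖u‖ = 1) (hθ : ‖θ‖ = 1) :
    ⟪rot u, θ⟫^2 + ⟪u, θ⟫^2 = 1 := by
  have h : u 0^2 + u 1^2 = 1 := by rw [← norm_sq_coord, hu]; norm_num
  have h2 : θ 0^2 + θ 1^2 = 1 := by rw [← norm_sq_coord, hθ]; norm_num
  simp only [inner_coord, rot_apply0, rot_apply1]
  linear_combination (θ 0^2 + θ 1^2) * h + h2

lemma inner_u_rot (u : Pt) : ⟪u, rot u⟫ = 0 := by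
  simp [inner_coord, rot_apply0, rot_apply1]; ring

lemma rot_neg (u : Pt) : rot (-u) = -(rot u) := by
  ext i; fin_cases i <;> simp [rot]
lemma sq_ge (a b : ℝ) (ha : 0 ≤ a) (hb : 0 ≤ b) (h : b^2 ≤ a^2) : b ≤ a := by nlinarith

lemma cross_nonneg (x y x' y' : ℝ) (hx : x^2+y^2=1) (hx' : x'^2+y'^2=1) (hy : 0 < y) (hy' : 0 < y')
    (hxx : x ≤ x') : 0 ≤ x'*y - x*y' := by
  rcases le_or_gt 0 x with h0 | h0
  · have h1 : 0 ≤ x' := le_trans h0 hxx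
    have := sq_ge (x'*y) (x*y') (mul_nonneg h1 hy.le) (mul_nonneg h0 hy'.le) (by nlinarith)
    linarith
  rcases le_or_gt 0 x' with h1 | h1
  · have h2 : x * y' ≤ 0 := mul_nonpos_of_nonpos_of_nonneg h0.le hy'.le
    have h3 : 0 ≤ x' * y := mul_nonneg h1 hy.le
    linarith
  · have := sq_ge (-(x*y')) (-(x'*y)) (by nlinarith) (by nlinarith) (by nlinarith)
    linarith

lemma cross_nonneg' (x y x' y' : ℝ) (hx : x^2+y^2=1) (hx' : x'^2+y'^2=1) (hy : 0 < y) (hy' : 0 < y')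
    (hxx : x ≤ x') : 0 ≤ x'*y - x*y' + y' - y := by
  have hx1 : x ≤ 1 := by nlinarith
  have hx1' : x' ≤ 1 := by nlinarith
  have key : (y*(1-x'))^2 ≤ (y'*(1-x))^2 := by
    have h2 : 0 ≤ (1-x)*(1-x')*(x'-x) :=
      mul_nonneg (mul_nonneg (by linarith) (by linarith)) (by linarith)
    nlinarith [h2, hx, hx']
  have := sq_ge (y'*(1-x)) (y*(1-x')) (by nlinarith) (by nlinarith) key
  nlinarith

/-- Monotonicity: the support arc is an initial segment from the `n` direction. -/
lemma mono_r (p q r x y x' y' : ℝ) (hr : 0 ≤ r) (hx : x^2+y^2=1) (hx' : x'^2+y'^2=1)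
    (hy : 0 < y) (hy' : 0 < y') (hxx : x ≤ x') (hp : r ≤ p) (h : r ≤ p*x + q*y) :
    r ≤ p*x' + q*y' := by
  have h1 := cross_nonneg x y x' y' hx hx' hy hy' hxx
  have h2 := cross_nonneg' x y x' y' hx hx' hy hy' hxx
  -- y*(p*x' + q*y') = (x'*y - x*y')*p + y'*(p*x+q*y) ≥ (x'*y-x*y')*r + y'*r ≥ y*r
  have key : y*(p*x' + q*y') ≥ y*r := by
    have e : y*(p*x' + q*y') = (x'*y - x*y')*p + y'*(p*x+q*y) := by ring
    calc y*(p*x' + q*y') = (x'*y - x*y')*p + y'*(p*x+q*y) := e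
    _ ≥ (x'*y - x*y')*r + y'*r := by
        apply add_le_add (mul_le_mul_of_nonneg_left hp h1) (mul_le_mul_of_nonneg_left h hy'.le)
    _ ≥ y*r := by nlinarith
  exact le_of_mul_le_mul_left (by linarith) hy

/-- Straddle: an arc meeting both open half-circles contains `n` or `-n`. -/
lemma straddle_r (p q r x y x'' y'' : ℝ) (hr : 0 ≤ r) (hx : x^2+y^2=1) (hx'' : x''^2+y''^2=1)
    (hy : 0 < y) (hy'' : y'' < 0) (h1 : r ≤ p*x + q*y) (h2 : r ≤ p*x'' + q*y'') :
    r ≤ p ∨ r ≤ -p := by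
  by_contra hc
  push_neg at hc
  obtain ⟨ha, hb⟩ := hc
  have hax : x ≤ 1 ∧ -1 ≤ x ∧ x'' ≤ 1 ∧ -1 ≤ x'' := by refine ⟨?_,?_,?_,?_⟩ <;> nlinarith
  rcases le_or_gt 0 q with hq | hq
  · -- use second: p*x'' ≥ r - q*y'' ≥ r, but |p| < r
    have : p*x'' < r := by
      rcases le_or_gt 0 p with hp | hp
      · calc p*x'' ≤ p*1 := by nlinarith
        _ < r := by linarith
      · calc p*x'' ≤ (-p)*1 := by nlinarith
        _ < r := by linarith
    nlinarith [mul_nonneg hq (neg_nonneg.2 hy''.le)]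
  · have : p*x < r := by
      rcases le_or_gt 0 p with hp | hp
      · calc p*x ≤ p*1 := by nlinarith
        _ < r := by linarith
      · calc p*x ≤ (-p)*1 := by nlinarith
        _ < r := by linarith
    nlinarith [mul_pos (neg_pos.2 hq) hy]

/-- Crossing contradiction. -/
lemma cross_r (p₁ q₁ p₂ q₂ r x₁ y₁ x₂ y₂ : ℝ) (hr : 0 ≤ r)
    (h1 : x₁^2+y₁^2=1) (h2 : x₂^2+y₂^2=1) (hy₁ : 0 < y₁) (hy₂ : 0 < y₂)
    (hp₁ : r ≤ p₁) (hp₂ : r ≤ p₂)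
    (h11 : r ≤ p₁*x₁ + q₁*y₁) (h21 : p₂*x₁ + q₂*y₁ < r)
    (h22 : r ≤ p₂*x₂ + q₂*y₂) (h12 : p₁*x₂ + q₁*y₂ < r) : False := by
  rcases le_total x₁ x₂ with h | h
  · exact absurd (mono_r p₁ q₁ r x₁ y₁ x₂ y₂ hr h1 h2 hy₁ hy₂ h hp₁ h11) (not_le.2 h12)
  · exact absurd (mono_r p₂ q₂ r x₂ y₂ x₁ y₁ hr h2 h1 hy₂ hy₁ h hp₂ h22) (not_le.2 h21)

/-- The combinatorial core: directions analysis on the circle. -/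
lemma core (u : Pt) (hu : ‖u‖ = 1) (d r : ℝ) (hd : 0 < d) (hr : 0 ≤ r) (w w' : Fin 3 → Pt)
    (hww : ∀ i, w' i = w i - d • u)
    (H : ∀ θ : Pt, ‖θ‖ = 1 → ∃ i, r ≤ ⟪w i, θ⟫)
    (H' : ∀ θ : Pt, ‖θ‖ = 1 → ∃ i, r ≤ ⟪w' i, θ⟫) :
    (∃ j, ∀ θ : Pt, ‖θ‖ = 1 → 0 < ⟪u, θ⟫ → ∃ i, i ≠ j ∧ r ≤ ⟪w' i, θ⟫) ∨
    (∃ j, ∀ θ : Pt, ‖θ‖ = 1 → ⟪u, θ⟫ < 0 → ∃ i, i ≠ j ∧ r ≤ ⟪w i, θ⟫) := by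
  by_contra hcon
  push_neg at hcon
  obtain ⟨h1, h2⟩ := hcon
  choose θf hθ1 hθ2 hθ3 using h1
  choose ψf hψ1 hψ2 hψ3 using h2
  -- θf j is a direction where only vertex j supports the translated disk
  have hwj' : ∀ j, r ≤ ⟪w' j, θf j⟫ := by
    intro j
    obtain ⟨i, hi⟩ := H' (θf j) (hθ1 j)
    rcases eq_or_ne i j with rfl | hne
    · exact hi
    · exact absurd hi (not_le.2 (hθ3 j i hne))
  have hwj : ∀ j, r ≤ ⟪w j, ψf j⟫ := by
    intro j
    obtain ⟨i, hi⟩ := H (ψf j) (hψ1 j)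
    rcases eq_or_ne i j with rfl | hne
    · exact hi
    · exact absurd hi (not_le.2 (hψ3 j i hne))
  have hw'ψ : ∀ j, r ≤ ⟪w' j, ψf j⟫ := by
    intro j
    have e : ⟪w' j, ψf j⟫ = ⟪w j, ψf j⟫ - d * ⟪u, ψf j⟫ := by
      rw [hww j, inner_sub_left, real_inner_smul_left]
    have := hψ2 j
    have := hwj j
    nlinarith
  set n : Pt := rot u with hn_def
  have hn : ‖n‖ = 1 := by rw [hn_def, norm_rot, hu]
  have hwn : ∀ j, ⟪w' j, n⟫ = ⟪w j, n⟫ := by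
    intro j
    rw [hww j, inner_sub_left, real_inner_smul_left, inner_u_rot]
    ring
  have hwu : ∀ j, ⟪w' j, u⟫ = ⟪w j, u⟫ - d := by
    intro j
    rw [hww j, inner_sub_left, real_inner_smul_left, real_inner_self_eq_norm_sq, hu]
    ring
  -- each arc contains n or -n
  have hbound : ∀ j, r ≤ ⟪w j, n⟫ ∨ r ≤ -⟪w j, n⟫ := by
    intro j
    have e1 := expand u (w' j) (θf j) hu
    have e2 := expand u (w' j) (ψf j) hu
    have c1 := circle_coord u (θf j) hu (hθ1 j)
    have c2 := circle_coord u (ψf j) hu (hψ1 j)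
    have := straddle_r ⟪w' j, n⟫ ⟪w' j, u⟫ r ⟪n, θf j⟫ ⟪u, θf j⟫ ⟪n, ψf j⟫ ⟪u, ψf j⟫
      hr (by rw [hn_def]; exact c1) (by rw [hn_def]; exact c2) (hθ2 j) (hψ2 j)
      (by rw [← hn_def] at e1; linarith [hwj' j, e1]) (by rw [← hn_def] at e2; linarith [hw'ψ j, e2])
    rcases this with h | h
    · exact Or.inl (by rw [← hwn j]; exact h)
    · exact Or.inr (by rw [← hwn j]; linarith)
  -- pigeonhole
  obtain ⟨a, b, hab, hFab⟩ := Fintype.exists_ne_map_eq_of_card_lt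
    (fun j : Fin 3 => decide (r ≤ ⟪w j, n⟫)) (by simp)
  by_cases hFa : r ≤ ⟪w a, n⟫
  · have hFb : r ≤ ⟪w b, n⟫ := by
      have : decide (r ≤ ⟪w a, n⟫) = true := decide_eq_true hFa
      rw [hFab] at this
      exact of_decide_eq_true this
    have e1 := expand u (w' a) (θf a) hu
    have e2 := expand u (w' b) (θf a) hu
    have e3 := expand u (w' b) (θf b) hu
    have e4 := expand u (w' a) (θf b) hu
    exact cross_r ⟪w' a, n⟫ ⟪w' a, u⟫ ⟪w' b, n⟫ ⟪w' b, u⟫ r ⟪n, θf a⟫ ⟪u, θf a⟫ ⟪n, θf b⟫ ⟪u, θf b⟫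
      hr (circle_coord u (θf a) hu (hθ1 a)) (circle_coord u (θf b) hu (hθ1 b))
      (hθ2 a) (hθ2 b)
      (by rw [hwn a]; exact hFa) (by rw [hwn b]; exact hFb)
      (by linarith [hwj' a, e1]) (by linarith [hθ3 a b hab.symm, e2])
      (by linarith [hwj' b, e3]) (by linarith [hθ3 b a hab, e4])
  · have hFb : ¬ (r ≤ ⟪w b, n⟫) := by
      have : decide (r ≤ ⟪w a, n⟫) = false := decide_eq_false hFa
      rw [hFab] at this
      exact of_decide_eq_false this
    have hQa : r ≤ -⟪w a, n⟫ := (hbound a).resolve_left hFa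
    have hQb : r ≤ -⟪w b, n⟫ := (hbound b).resolve_left hFb
    -- work with -u, -n
    have hnu : ‖(-u : Pt)‖ = 1 := by rw [norm_neg, hu]
    have hrotneg : rot (-u) = -n := by rw [rot_neg, hn_def]
    have e1 := expand (-u) (w a) (ψf a) hnu
    have e2 := expand (-u) (w b) (ψf a) hnu
    have e3 := expand (-u) (w b) (ψf b) hnu
    have e4 := expand (-u) (w a) (ψf b) hnu
    rw [hrotneg] at e1 e2 e3 e4
    have c1 := circle_coord (-u) (ψf a) hnu (hψ1 a)
    have c2 := circle_coord (-u) (ψf b) hnu (hψ1 b)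
    rw [hrotneg] at c1 c2
    exact cross_r ⟪w a, -n⟫ ⟪w a, -u⟫ ⟪w b, -n⟫ ⟪w b, -u⟫ r
      ⟪(-n : Pt), ψf a⟫ ⟪(-u : Pt), ψf a⟫ ⟪(-n : Pt), ψf b⟫ ⟪(-u : Pt), ψf b⟫
      hr c1 c2
      (by simp only [inner_neg_left]; linarith [hψ2 a]) (by simp only [inner_neg_left]; linarith [hψ2 b])
      (by simp only [inner_neg_right]; exact hQa) (by simp only [inner_neg_right]; exact hQb)
      (by linarith [hwj a, e1]) (by linarith [hψ3 a b hab.symm, e2])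
      (by linarith [hwj b, e3]) (by linarith [hψ3 b a hab, e4])

lemma sup_lemma (c₁ : Pt) (r : ℝ) (hr : 0 ≤ r) (A : Fin 3 → Pt)
    (h : Metric.closedBall c₁ r ⊆ convexHull ℝ {A 0, A 1, A 2}) :
    ∀ θ : Pt, ‖θ‖ = 1 → ∃ i, r ≤ ⟪A i - c₁, θ⟫ := by
  intro θ hθ
  have hx : c₁ + r • θ ∈ Metric.closedBall c₁ r := by
    simp [Metric.mem_closedBall, dist_eq_norm, norm_smul, hθ, abs_of_nonneg hr]
  have hx2 := h hx
  set M := max (max ⟪θ, A 0⟫ ⟪θ, A 1⟫) ⟪θ, A 2⟫ with hM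
  have hhalf : convexHull ℝ {A 0, A 1, A 2} ⊆ {y : Pt | ⟪θ, y⟫ ≤ M} := by
    apply convexHull_min
    · rintro y (rfl | rfl | rfl)
      · show ⟪θ, A 0⟫ ≤ M
        exact le_max_of_le_left (le_max_left _ _)
      · show ⟪θ, A 1⟫ ≤ M
        exact le_max_of_le_left (le_max_right _ _)
      · show ⟪θ, A 2⟫ ≤ M
        exact le_max_right _ _
    · exact convex_halfSpace_le ⟨fun a b => inner_add_right _ _ _, fun s a => real_inner_smul_right _ _ _⟩ M
  have h3 : ⟪θ, c₁ + r • θ⟫ ≤ M := hhalf hx2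
  have h4 : ⟪θ, c₁ + r • θ⟫ = ⟪θ, c₁⟫ + r := by
    rw [inner_add_right, real_inner_smul_right, real_inner_self_eq_norm_sq, hθ]; ring
  have key : ∃ i, M ≤ ⟪θ, A i⟫ := by
    rcases max_choice (max ⟪θ, A 0⟫ ⟪θ, A 1⟫) ⟪θ, A 2⟫ with h' | h'
    · rcases max_choice ⟪θ, A 0⟫ ⟪θ, A 1⟫ with h'' | h''
      · exact ⟨0, by rw [hM, h', h'']⟩
      · exact ⟨1, by rw [hM, h', h'']⟩
    · exact ⟨2, by rw [hM, h']⟩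
  obtain ⟨i, hi⟩ := key
  refine ⟨i, ?_⟩
  have : ⟪A i - c₁, θ⟫ = ⟪θ, A i⟫ - ⟪θ, c₁⟫ := by
    rw [inner_sub_left, real_inner_comm (A i) θ, real_inner_comm c₁ θ]
  linarith

lemma isCompact_convexJoin {s t : Set Pt} (hs : IsCompact s) (ht : IsCompact t) :
    IsCompact (convexJoin ℝ s t) := by
  have : convexJoin ℝ s t =
      (fun q : (Pt × Pt) × ℝ => (1 - q.2) • q.1.1 + q.2 • q.1.2) '' ((s ×ˢ t) ×ˢ Set.Icc 0 1) := by
    ext x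
    rw [mem_convexJoin]
    constructor
    · rintro ⟨a, ha, b, hb, hx⟩
      rw [segment_eq_image] at hx
      obtain ⟨θ, hθ, hx⟩ := hx
      exact ⟨((a, b), θ), ⟨⟨ha, hb⟩, hθ⟩, hx⟩
    · rintro ⟨⟨⟨a, b⟩, θ⟩, ⟨⟨ha, hb⟩, hθ⟩, hx⟩
      exact ⟨a, ha, b, hb, by rw [segment_eq_image]; exact ⟨θ, hθ, hx⟩⟩
  rw [this]
  apply IsCompact.image ((hs.prod ht).prod isCompact_Icc)
  fun_prop

lemma isCompact_hull_union {s t : Set Pt} (hs : IsCompact s) (ht : IsCompact t)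
    (hcs : Convex ℝ s) (hct : Convex ℝ t) (hs0 : s.Nonempty) (ht0 : t.Nonempty) :
    IsCompact (convexHull ℝ (s ∪ t)) := by
  rw [Convex.convexHull_union hcs hct hs0 ht0]
  exact isCompact_convexJoin hs ht

lemma sep_lemma (c₁ c₂ : Pt) (r : ℝ) (hr : 0 ≤ r) (S : Set Pt) (hS : S.Finite) (hS0 : S.Nonempty)
    (h : ∀ θ : Pt, ‖θ‖ = 1 → 0 < ⟪c₂ - c₁, θ⟫ → ∃ p ∈ S, r ≤ ⟪p - c₂, θ⟫) :
    Metric.closedBall c₂ r ⊆ convexHull ℝ (Metric.closedBall c₁ r ∪ S) := by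
  intro x hx
  by_contra hxC
  have hCeq : convexHull ℝ (Metric.closedBall c₁ r ∪ S)
      = convexHull ℝ (Metric.closedBall c₁ r ∪ convexHull ℝ S) := by
    rw [convexHull_convexHull_union_right]
  set C := convexHull ℝ (Metric.closedBall c₁ r ∪ S) with hC
  have hCcompact : IsCompact C := by
    have h' : IsCompact (convexHull ℝ (Metric.closedBall c₁ r ∪ convexHull ℝ S)) :=
      isCompact_hull_union (isCompact_closedBall c₁ r) (hS.isCompact_convexHull ℝ)
        (convex_closedBall c₁ r) (convex_convexHull ℝ S)
        ⟨c₁, Metric.mem_closedBall_self hr⟩ (hS0.mono (subset_convexHull ℝ S))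
    rwa [convexHull_convexHull_union_right] at h'
  have hCconvex : Convex ℝ C := convex_convexHull ℝ _
  obtain ⟨f, U, hfU, hUx⟩ := geometric_hahn_banach_closed_point hCconvex hCcompact.isClosed hxC
  set v : Pt := (InnerProductSpace.toDual ℝ Pt).symm f with hv
  have hfv : ∀ y : Pt, f y = ⟪v, y⟫ := fun y =>
    (InnerProductSpace.toDual_symm_apply).symm
  -- v ≠ 0
  have hc₁C : c₁ ∈ C := subset_convexHull ℝ _ (Or.inl (Metric.mem_closedBall_self hr))
  have hvne : v ≠ 0 := by
    intro h0
    have h1 := hfU c₁ hc₁C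
    have h2 := hUx
    rw [hfv, h0, inner_zero_left] at h1
    rw [hfv, h0, inner_zero_left] at h2
    linarith
  have hvnorm : 0 < ‖v‖ := norm_pos_iff.2 hvne
  -- the point of the ball around c₁ farthest in direction v
  have hz : c₁ + (r * ‖v‖⁻¹) • v ∈ Metric.closedBall c₁ r := by
    simp only [Metric.mem_closedBall, dist_eq_norm, add_sub_cancel_left, norm_smul]
    rw [Real.norm_eq_abs, abs_of_nonneg (show (0:ℝ) ≤ r * ‖v‖⁻¹ by positivity),
        mul_assoc, inv_mul_cancel₀ (ne_of_gt hvnorm), mul_one]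
  have h1 : ⟪v, c₁⟫ + r * ‖v‖ < U := by
    have hq := hfU _ (subset_convexHull ℝ _ (Or.inl hz))
    rw [hfv, inner_add_right, real_inner_smul_right, real_inner_self_eq_norm_mul_norm] at hq
    have e : r * ‖v‖⁻¹ * (‖v‖ * ‖v‖) = r * ‖v‖ := by field_simp
    linarith [hq]
  have h2 : ⟪v, x⟫ ≤ ⟪v, c₂⟫ + ‖v‖ * r := by
    have hcs : ⟪v, x - c₂⟫ ≤ ‖v‖ * ‖x - c₂‖ := real_inner_le_norm v (x - c₂)
    have hxd : ‖x - c₂‖ ≤ r := by rwa [Metric.mem_closedBall, dist_eq_norm] at hx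
    have := mul_le_mul_of_nonneg_left hxd (norm_nonneg v)
    rw [inner_sub_right] at hcs
    linarith
  have hUlt : U < ⟪v, x⟫ := by rw [← hfv]; exact hUx
  have hpos : 0 < ⟪c₂ - c₁, v⟫ := by
    rw [real_inner_comm, inner_sub_right]
    linarith [mul_comm r ‖v‖]
  -- normalize
  set θ : Pt := ‖v‖⁻¹ • v with hθdef
  have hθnorm : ‖θ‖ = 1 := by
    rw [hθdef, norm_smul, Real.norm_eq_abs, abs_of_nonneg (inv_nonneg.2 (norm_nonneg v)),
      inv_mul_cancel₀ (ne_of_gt hvnorm)]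
  have hθpos : 0 < ⟪c₂ - c₁, θ⟫ := by
    rw [hθdef, real_inner_smul_right]
    positivity
  obtain ⟨p, hpS, hp⟩ := h θ hθnorm hθpos
  have hpC : p ∈ C := subset_convexHull ℝ _ (Or.inr hpS)
  have hpfU : ⟪v, p⟫ < U := by rw [← hfv]; exact hfU p hpC
  -- but ⟪v,p⟫ ≥ ⟪v,c₂⟫ + r‖v‖ ≥ ⟪v,x⟫ > U
  have hp2 : r * ‖v‖ ≤ ⟪p - c₂, v⟫ := by
    have := mul_le_mul_of_nonneg_left hp (le_of_lt hvnorm)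
    rw [hθdef, real_inner_smul_right, ← mul_assoc, mul_inv_cancel₀ (ne_of_gt hvnorm), one_mul] at this
    linarith
  have hp3 : ⟪v, c₂⟫ + r * ‖v‖ ≤ ⟪v, p⟫ := by
    rw [real_inner_comm, inner_sub_right] at hp2
    linarith
  linarith

/-- Degenerate case: both disks inside a segment. -/
lemma seg_helper (c c' : Pt) (r : ℝ) (hr : 0 ≤ r) (P Q : Pt)
    (h0 : Metric.closedBall c r ⊆ segment ℝ P Q)
    (h1 : Metric.closedBall c' r ⊆ segment ℝ P Q) :
    Metric.closedBall c' r ⊆ convexHull ℝ (Metric.closedBall c r ∪ {Q}) ∨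
    Metric.closedBall c r ⊆ convexHull ℝ (Metric.closedBall c' r ∪ {Q}) := by
  have hcc : c ∈ Metric.closedBall c r := Metric.mem_closedBall_self hr
  have hcc' : c' ∈ Metric.closedBall c' r := Metric.mem_closedBall_self hr
  by_cases hPQ : P = Q
  · left
    intro x hx
    have hxP : x = Q := by
      have := h1 hx
      rw [hPQ, segment_same] at this
      exact this
    exact subset_convexHull ℝ _ (Or.inr (by rw [hxP]; rfl))
  · -- r = 0
    have hQP : Q - P ≠ (0 : Pt) := sub_ne_zero.2 (Ne.symm hPQ)
    set ν : Pt := rot (Q - P) with hν_def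
    have hνnorm : 0 < ‖ν‖ := by
      rw [hν_def, norm_rot]
      exact norm_pos_iff.2 hQP
    have hconst : ∀ x ∈ segment ℝ P Q, ⟪x, ν⟫ = ⟪P, ν⟫ := by
      intro x hx
      rw [segment_eq_image' ℝ P Q] at hx
      obtain ⟨t, _, rfl⟩ := hx
      rw [inner_add_left, real_inner_smul_left, inner_u_rot]
      ring
    have hball : ∀ s : ℝ, |s| ≤ r * ‖ν‖⁻¹ → c + s • ν ∈ Metric.closedBall c r := by
      intro s hs
      simp only [Metric.mem_closedBall, dist_eq_norm, add_sub_cancel_left, norm_smul,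
        Real.norm_eq_abs]
      calc |s| * ‖ν‖ ≤ r * ‖ν‖⁻¹ * ‖ν‖ := by
            exact mul_le_mul_of_nonneg_right hs (le_of_lt hνnorm)
      _ = r := by field_simp
    have hr0 : r = 0 := by
      have habs : |r * ‖ν‖⁻¹| ≤ r * ‖ν‖⁻¹ := le_of_eq (abs_of_nonneg (by positivity))
      have hm1 := hconst _ (h0 (hball (r * ‖ν‖⁻¹) habs))
      have hm2 := hconst _ (h0 (hball (-(r * ‖ν‖⁻¹)) (by rwa [abs_neg])))
      rw [inner_add_left, real_inner_smul_left, real_inner_self_eq_norm_mul_norm] at hm1 hm2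
      have hz : r * ‖ν‖⁻¹ * (‖ν‖ * ‖ν‖) = 0 := by linarith
      have e : r * ‖ν‖⁻¹ * (‖ν‖ * ‖ν‖) = r * ‖ν‖ := by field_simp
      exact (mul_eq_zero.1 (e ▸ hz)).resolve_right (ne_of_gt hνnorm)
    subst hr0
    simp only [Metric.closedBall_zero] at h0 h1 ⊢
    -- c and c' are on the segment
    have hc := h0 rfl
    have hc' := h1 rfl
    rw [segment_eq_image' ℝ P Q] at hc hc'
    obtain ⟨t, ht, hct⟩ := hc
    obtain ⟨t', ht', hct'⟩ := hc'
    -- key: if t ≤ t' then c' ∈ convexHull ({c} ∪ {Q})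
    have key : ∀ (a a' : Pt) (s s' : ℝ), s ∈ Set.Icc (0:ℝ) 1 → s' ∈ Set.Icc (0:ℝ) 1 →
        s ≤ s' → a = P + s • (Q - P) → a' = P + s' • (Q - P) →
        a' ∈ convexHull ℝ ({a} ∪ {Q} : Set Pt) := by
      intro a a' s s' hs hs' hss ha ha'
      rcases eq_or_lt_of_le hs.2 with h1s | h1s
      · -- s = 1, so s' = 1 and a = a' = Q
        have hs1 : s' = 1 := le_antisymm hs'.2 (h1s ▸ hss)
        have : a' = a := by rw [ha, ha', hs1, ← h1s]
        exact subset_convexHull ℝ _ (Or.inl (by rw [this]; rfl))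
      · set σ := (s' - s)/(1 - s) with hσ
        have h1s' : (1:ℝ) - s ≠ 0 := by linarith
        have hσ0 : 0 ≤ σ := div_nonneg (by linarith) (by linarith)
        have hσ1 : σ ≤ 1 := by
          rw [hσ, div_le_one (by linarith)]
          linarith [hs'.2]
        have hcomb : (1 - σ) • a + σ • Q = a' := by
          have a1 : (1-σ)*s + σ = s' := by have hσm : σ * (1 - s) = s' - s := (by rw [hσ]; exact div_mul_cancel₀ _ h1s'); linear_combination hσm
          rw [ha, ha']
          calc (1-σ) • (P + s • (Q-P)) + σ • Q = P + ((1-σ)*s + σ) • (Q-P) := by module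
          _ = P + s' • (Q-P) := by rw [a1]
        have : a' ∈ segment ℝ a Q := ⟨1 - σ, σ, by linarith, hσ0, by ring, hcomb⟩
        rw [← convexHull_pair] at this
        exact convexHull_mono (by intro z hz; rcases hz with rfl | rfl
                                  · exact Or.inl rfl
                                  · exact Or.inr rfl) this
    rcases le_total t t' with h | h
    · left
      intro x hx
      rw [Set.mem_singleton_iff] at hx
      rw [hx]
      exact key c c' t t' ht ht' h hct.symm hct'.symm
    · right
      intro x hx
      rw [Set.mem_singleton_iff] at hx
      rw [hx]
      exact key c' c t' t ht' ht h hct'.symm hct.symm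

/-- Adaricheva–Bolat: if a closed disk and an isometric copy of it are contained
in a triangle, then one of them is contained in the convex hull of the other
together with two of the three vertices. -/
theorem stmt16 (c : Pt) (r : ℝ) (hr : 0 ≤ r) (K : Fin 2 → Set Pt)
    (hK0 : K 0 = Metric.closedBall c r)
    (φ : Pt ≃ᵢ Pt) (hK1 : K 1 = φ '' K 0)
    (A : Fin 3 → Pt)
    (hsub : ∀ i : Fin 2, K i ⊆ convexHull ℝ {A 0, A 1, A 2}) :
    ∃ (j : Fin 3) (k : Fin 2),
      K (1 - k) ⊆ convexHull ℝ (K k ∪ (({A 0, A 1, A 2} : Set Pt) \ {A j})) := by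
  have hK1' : K 1 = Metric.closedBall (φ c) r := by
    rw [hK1, hK0, IsometryEquiv.image_closedBall]
  set c' := φ c with hc'def
  have e10 : (1 - 0 : Fin 2) = 1 := by decide
  have e11 : (1 - 1 : Fin 2) = 0 := by decide
  by_cases hcc : c' = c
  · refine ⟨0, 0, ?_⟩
    rw [e10, hK1', hcc, ← hK0]
    exact fun x hx => subset_convexHull ℝ _ (Or.inl hx)
  -- degenerate triangle cases
  by_cases h01 : A 0 = A 1
  · by_cases h12b : A 1 = A 2
    · -- all three vertices equal; forces c' = c, contradiction
      exfalso
      have hTeq : ({A 0, A 1, A 2} : Set Pt) = {A 2} := by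
        rw [h01, h12b]; simp
      have hT : convexHull ℝ ({A 0, A 1, A 2} : Set Pt) = {A 2} := by
        rw [hTeq, convexHull_singleton]
      have hcK : c ∈ K 0 := by rw [hK0]; exact Metric.mem_closedBall_self hr
      have hc'K : c' ∈ K 1 := by rw [hK1']; exact Metric.mem_closedBall_self hr
      have e1 : c = A 2 := by have := hsub 0 hcK; rwa [hT, Set.mem_singleton_iff] at this
      have e2 : c' = A 2 := by have := hsub 1 hc'K; rwa [hT, Set.mem_singleton_iff] at this
      exact hcc (e2.trans e1.symm)
    · have hA21 : A 2 ≠ A 0 := fun h => h12b (h01.symm.trans h.symm)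
      have hTeq : ({A 0, A 1, A 2} : Set Pt) = {A 1, A 2} := by
        rw [h01]; ext x
        simp only [Set.mem_insert_iff, Set.mem_singleton_iff]; tauto
      have hseg : convexHull ℝ ({A 0, A 1, A 2} : Set Pt) = segment ℝ (A 1) (A 2) := by
        rw [hTeq, convexHull_pair]
      have hdiff : ({A 0, A 1, A 2} : Set Pt) \ {A 0} = {A 2} := by
        ext x
        simp only [Set.mem_diff, Set.mem_insert_iff, Set.mem_singleton_iff]
        constructor
        · rintro ⟨(rfl | rfl | rfl), hne⟩
          · exact absurd rfl hne
          · exact absurd h01.symm hne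
          · rfl
        · rintro rfl
          exact ⟨Or.inr (Or.inr rfl), hA21⟩
      have hs0 : Metric.closedBall c r ⊆ segment ℝ (A 1) (A 2) := by
        rw [← hseg, ← hK0]; exact hsub 0
      have hs1 : Metric.closedBall c' r ⊆ segment ℝ (A 1) (A 2) := by
        rw [← hseg, ← hK1']; exact hsub 1
      rcases seg_helper c c' r hr (A 1) (A 2) hs0 hs1 with hL | hR
      · exact ⟨0, 0, by rw [e10, hK1', hK0, hdiff]; exact hL⟩
      · exact ⟨0, 1, by rw [e11, hK1', hK0, hdiff]; exact hR⟩
  by_cases h02 : A 0 = A 2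
  · have h10 : A 1 ≠ A 0 := fun h => h01 h.symm
    have hTeq : ({A 0, A 1, A 2} : Set Pt) = {A 0, A 1} := by
      rw [← h02]; ext x
      simp only [Set.mem_insert_iff, Set.mem_singleton_iff]; tauto
    have hseg : convexHull ℝ ({A 0, A 1, A 2} : Set Pt) = segment ℝ (A 0) (A 1) := by
      rw [hTeq, convexHull_pair]
    have hdiff : ({A 0, A 1, A 2} : Set Pt) \ {A 0} = {A 1} := by
      ext x
      simp only [Set.mem_diff, Set.mem_insert_iff, Set.mem_singleton_iff]
      constructor
      · rintro ⟨(rfl | rfl | rfl), hne⟩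
        · exact absurd rfl hne
        · rfl
        · exact absurd h02.symm hne
      · rintro rfl
        exact ⟨Or.inr (Or.inl rfl), h10⟩
    have hs0 : Metric.closedBall c r ⊆ segment ℝ (A 0) (A 1) := by
      rw [← hseg, ← hK0]; exact hsub 0
    have hs1 : Metric.closedBall c' r ⊆ segment ℝ (A 0) (A 1) := by
      rw [← hseg, ← hK1']; exact hsub 1
    rcases seg_helper c c' r hr (A 0) (A 1) hs0 hs1 with hL | hR
    · exact ⟨0, 0, by rw [e10, hK1', hK0, hdiff]; exact hL⟩
    · exact ⟨0, 1, by rw [e11, hK1', hK0, hdiff]; exact hR⟩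
  by_cases h12 : A 1 = A 2
  · have h10 : A 1 ≠ A 0 := fun h => h01 h.symm
    have hTeq : ({A 0, A 1, A 2} : Set Pt) = {A 1, A 0} := by
      rw [← h12]; ext x
      simp only [Set.mem_insert_iff, Set.mem_singleton_iff]; tauto
    have hseg : convexHull ℝ ({A 0, A 1, A 2} : Set Pt) = segment ℝ (A 1) (A 0) := by
      rw [hTeq, convexHull_pair]
    have hdiff : ({A 0, A 1, A 2} : Set Pt) \ {A 1} = {A 0} := by
      ext x
      simp only [Set.mem_diff, Set.mem_insert_iff, Set.mem_singleton_iff]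
      constructor
      · rintro ⟨(rfl | rfl | rfl), hne⟩
        · rfl
        · exact absurd rfl hne
        · exact absurd h12.symm hne
      · rintro rfl
        exact ⟨Or.inl rfl, h10.symm⟩
    have hs0 : Metric.closedBall c r ⊆ segment ℝ (A 1) (A 0) := by
      rw [← hseg, ← hK0]; exact hsub 0
    have hs1 : Metric.closedBall c' r ⊆ segment ℝ (A 1) (A 0) := by
      rw [← hseg, ← hK1']; exact hsub 1
    rcases seg_helper c c' r hr (A 1) (A 0) hs0 hs1 with hL | hR
    · exact ⟨1, 0, by rw [e10, hK1', hK0, hdiff]; exact hL⟩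
    · exact ⟨1, 1, by rw [e11, hK1', hK0, hdiff]; exact hR⟩
  -- main case: triangle nondegenerate, disks with distinct centers
  have h10 : A 1 ≠ A 0 := fun h => h01 h.symm
  have h20 : A 2 ≠ A 0 := fun h => h02 h.symm
  have h21 : A 2 ≠ A 1 := fun h => h12 h.symm
  have hdist : ∀ i jj : Fin 3, i ≠ jj → A i ≠ A jj := by
    intro i jj hij
    fin_cases i <;> fin_cases jj <;> first | (exact absurd rfl hij) | assumption
  have hmem : ∀ i jj : Fin 3, i ≠ jj → A i ∈ ({A 0, A 1, A 2} : Set Pt) \ {A jj} := by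
    intro i jj hij
    refine ⟨?_, hdist i jj hij⟩
    fin_cases i
    · exact Or.inl rfl
    · exact Or.inr (Or.inl rfl)
    · exact Or.inr (Or.inr rfl)
  have hfin : ∀ jj : Fin 3, (({A 0, A 1, A 2} : Set Pt) \ {A jj}).Finite :=
    fun jj => Set.Finite.diff (((Set.finite_singleton (A 2)).insert (A 1)).insert (A 0))
  have hne : ∀ jj : Fin 3, (({A 0, A 1, A 2} : Set Pt) \ {A jj}).Nonempty := by
    intro jj
    fin_cases jj
    · exact ⟨A 1, hmem 1 0 (by decide)⟩
    · exact ⟨A 0, hmem 0 1 (by decide)⟩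
    · exact ⟨A 0, hmem 0 2 (by decide)⟩
  set d := ‖c' - c‖ with hd_def
  have hd : 0 < d := norm_pos_iff.2 (sub_ne_zero.2 hcc)
  set u : Pt := d⁻¹ • (c' - c) with hu_def
  have hu : ‖u‖ = 1 := by
    rw [hu_def, hd_def]; exact norm_smul_inv_norm (sub_ne_zero.2 hcc)
  have hdu : d • u = c' - c := by
    rw [hu_def]; exact smul_inv_smul₀ (ne_of_gt hd) _
  have H := sup_lemma c r hr A (by rw [← hK0]; exact hsub 0)
  have H' := sup_lemma c' r hr A (by rw [← hK1']; exact hsub 1)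
  have hcore := core u hu d r hd hr (fun i => A i - c) (fun i => A i - c')
    (fun i => by rw [hdu]; abel) H H'
  rcases hcore with ⟨j, hj⟩ | ⟨j, hj⟩
  · refine ⟨j, 0, ?_⟩
    rw [e10, hK1', hK0]
    apply sep_lemma c c' r hr _ (hfin j) (hne j)
    intro θ hθ hpos
    have hup : 0 < ⟪u, θ⟫ := by
      rw [hu_def, real_inner_smul_left]
      exact mul_pos (inv_pos.2 hd) hpos
    obtain ⟨i, hij, hwi⟩ := hj θ hθ hup
    exact ⟨A i, hmem i j hij, hwi⟩
  · refine ⟨j, 1, ?_⟩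
    rw [e11, hK1', hK0]
    apply sep_lemma c' c r hr _ (hfin j) (hne j)
    intro θ hθ hpos
    have hneg : ⟪c' - c, θ⟫ < 0 := by
      rw [show c' - c = -(c - c') by abel, inner_neg_left]
      linarith
    have hun : ⟪u, θ⟫ < 0 := by
      rw [hu_def, real_inner_smul_left]
      exact mul_neg_of_pos_of_neg (inv_pos.2 hd) hneg
    obtain ⟨i, hij, hwi⟩ := hj θ hθ hun
    exact ⟨A i, hmem i j hij, hwi⟩
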